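/- Let p and q be coprime integers with p > q > 1 and p > 2q−1. Then the topological closure in ℝ of the span-set Span = {span(n) : n ∈ ℕ} has no isolated points: every point x of the closure of Span is an accumulation point of the closure of Span. -/

import Mathlib

/-- `w` labels a branch of the base-p/q automaton with digit set `E` from state `n`:
there are states `s 0 = n, s 1, s 2, …` with `q·s(k+1) = p·s k + w k` and `w k ∈ E`. -/
def IsBranch (p q : ℕ) (E : Set ℤ) (n : ℕ) (w : ℕ → ℤ) : Prop :=
  ∃ s : ℕ → ℕ, s 0 = n ∧ ∀ k : ℕ, (q : ℤ) * s (k + 1) = p * s k + w k ∧ w k ∈ E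

/-- `u` (a word of length `ℓ`) labels a path from `n` to `m` in the base-p/q automaton
with digit set `E`. -/
def IsPath (p q : ℕ) (E : Set ℤ) (n m ℓ : ℕ) (u : ℕ → ℤ) : Prop :=
  ∃ s : ℕ → ℕ, s 0 = n ∧ s ℓ = m ∧
    ∀ k < ℓ, (q : ℤ) * s (k + 1) = p * s k + u k ∧ u k ∈ E

/-- The canonical digit alphabet `A_p = {0, 1, …, p−1}`. -/
def Ap (p : ℕ) : Set ℤ := Set.Icc 0 ((p : ℤ) - 1)

/-- The lower alphabet `{0, 1, …, q−1}`. -/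
def LowAlph (q : ℕ) : Set ℤ := Set.Icc 0 ((q : ℤ) - 1)

/-- The upper alphabet `{p−q, …, p−1}`. -/
def UpAlph (p q : ℕ) : Set ℤ := Set.Icc ((p : ℤ) - q) ((p : ℤ) - 1)

/-- The alphabet `D = {p−2q+1, …, p−1}` of the automaton `S_{p/q}`. -/
def Dalph (p q : ℕ) : Set ℤ := Set.Icc ((p : ℤ) - 2 * q + 1) ((p : ℤ) - 1)

/-- Evaluation after the radix point: `ρ(w) = Σ_{i≥1} (w_i/q)·(q/p)^i`
(here `w k` is the `(k+1)`-st digit). -/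
noncomputable def rho (p q : ℕ) (w : ℕ → ℤ) : ℝ :=
  ∑' i : ℕ, ((w i : ℝ) / q) * ((q : ℝ) / p) ^ (i + 1)


namespace Stmt2Aux

def aSt (p q n : ℕ) : ℕ → ℕ
  | 0 => n
  | k+1 => (p * aSt p q n k + q - 1) / q

def bSt (p q n : ℕ) : ℕ → ℕ
  | 0 => n
  | k+1 => (p * bSt p q n k + p - 1) / q

def wdig (p q n k : ℕ) : ℤ := q * aSt p q n (k+1) - p * aSt p q n k
def xdig (p q n k : ℕ) : ℤ := q * bSt p q n (k+1) - p * bSt p q n k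
def ddig (p q n k : ℕ) : ℤ := xdig p q n k - wdig p q n k

variable {p q : ℕ}

/-- key ℕ-division fact in ℤ form -/
lemma qmul_div (hq : 0 < q) (y : ℕ) :
    (q : ℤ) * ((y / q : ℕ) : ℤ) = (y : ℤ) - ((y % q : ℕ) : ℤ) := by
  have h := Nat.div_add_mod y q
  have h2 : ((q * (y / q) + y % q : ℕ) : ℤ) = (y : ℤ) := by rw [h]
  simp only [Nat.cast_add, Nat.cast_mul] at h2
  linarith

lemma wdig_bounds (hq : 0 < q) (n k : ℕ) :
    0 ≤ wdig p q n k ∧ wdig p q n k ≤ (q : ℤ) - 1 := by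
  have h1 : aSt p q n (k+1) = (p * aSt p q n k + q - 1) / q := rfl
  have h2 := qmul_div hq (p * aSt p q n k + q - 1)
  have h3 : ((p * aSt p q n k + q - 1) % q) < q := Nat.mod_lt _ hq
  have hc : ((p * aSt p q n k + q - 1 : ℕ) : ℤ) = (p : ℤ) * (aSt p q n k) + q - 1 := by
    push_cast [Nat.cast_sub (show 1 ≤ p * aSt p q n k + q by omega)]
    ring
  have hw : wdig p q n k = (q:ℤ) * ((p * aSt p q n k + q - 1) / q : ℕ) - (p:ℤ) * (aSt p q n k) := by
    unfold wdig; rw [h1]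
  rw [hw, h2, hc]
  have h4 : (0:ℤ) ≤ (((p * aSt p q n k + q - 1) % q : ℕ) : ℤ) := Int.natCast_nonneg _
  have h5 : ((((p * aSt p q n k + q - 1) % q : ℕ)) : ℤ) < q := by exact_mod_cast h3
  constructor <;> linarith

lemma xdig_bounds (hq : 0 < q) (hp : 0 < p) (n k : ℕ) :
    (p : ℤ) - q ≤ xdig p q n k ∧ xdig p q n k ≤ (p : ℤ) - 1 := by
  have h1 : bSt p q n (k+1) = (p * bSt p q n k + p - 1) / q := rfl
  have h2 := qmul_div hq (p * bSt p q n k + p - 1)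
  have h3 : ((p * bSt p q n k + p - 1) % q) < q := Nat.mod_lt _ hq
  have hc : ((p * bSt p q n k + p - 1 : ℕ) : ℤ) = (p : ℤ) * (bSt p q n k) + p - 1 := by
    push_cast [Nat.cast_sub (show 1 ≤ p * bSt p q n k + p by omega)]
    ring
  have hw : xdig p q n k = (q:ℤ) * ((p * bSt p q n k + p - 1) / q : ℕ) - (p:ℤ) * (bSt p q n k) := by
    unfold xdig; rw [h1]
  rw [hw, h2, hc]
  have h4 : (0:ℤ) ≤ (((p * bSt p q n k + p - 1) % q : ℕ) : ℤ) := Int.natCast_nonneg _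
  have h5 : ((((p * bSt p q n k + p - 1) % q : ℕ)) : ℤ) < q := by exact_mod_cast h3
  constructor <;> linarith

lemma ddig_bounds (hq : 0 < q) (hp : 0 < p) (n k : ℕ) :
    (p : ℤ) - 2*q + 1 ≤ ddig p q n k ∧ ddig p q n k ≤ (p : ℤ) - 1 := by
  have h1 := wdig_bounds (p := p) hq n k
  have h2 := xdig_bounds hq hp n k
  unfold ddig; constructor <;> linarith

/-- state recursions in ℤ -/
lemma a_rec (n k : ℕ) : (q:ℤ) * aSt p q n (k+1) = p * aSt p q n k + wdig p q n k := by
  unfold wdig; ring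

lemma b_rec (n k : ℕ) : (q:ℤ) * bSt p q n (k+1) = p * bSt p q n k + xdig p q n k := by
  unfold xdig; ring

/-- a ≤ b -/
lemma a_le_b (hpq : q ≤ p) (n k : ℕ) : aSt p q n k ≤ bSt p q n k := by
  induction k with
  | zero => exact le_refl n
  | succ k ih =>
      show (p * aSt p q n k + q - 1) / q ≤ (p * bSt p q n k + p - 1) / q
      apply Nat.div_le_div_right
      have : p * aSt p q n k ≤ p * bSt p q n k := Nat.mul_le_mul_left p ih
      omega

end Stmt2Aux

namespace Stmt2Aux
variable {p q : ℕ}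

/-- shifting the start by q^N * u shifts states below level N predictably -/
lemma a_shift (hq : 0 < q) (n N u : ℕ) : ∀ k, k ≤ N →
    aSt p q (n + q^N * u) k = aSt p q n k + p^k * q^(N-k) * u := by
  intro k
  induction k with
  | zero => intro _; simp [aSt]
  | succ k ih =>
      intro hk
      have hk' : k ≤ N := by omega
      have ihk := ih hk'
      show (p * aSt p q (n + q^N * u) k + q - 1) / q = _
      rw [ihk]
      have hsplit : p * (aSt p q n k + p ^ k * q ^ (N - k) * u) + q - 1
          = (p * aSt p q n k + q - 1) + (p^(k+1) * q^(N-(k+1)) * u) * q := by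
        have h1 : q ^ (N - k) = q ^ (N - (k+1)) * q := by
          rw [← pow_succ]
          congr 1
          omega
        rw [h1]
        have : 1 ≤ q := hq
        ring_nf
        omega
      rw [hsplit, Nat.add_mul_div_right _ _ hq]
      show _ = (p * aSt p q n k + q - 1) / q + p ^ (k+1) * q ^ (N - (k+1)) * u
      ring_nf

lemma b_shift (hq : 0 < q) (hp : 0 < p) (n N u : ℕ) : ∀ k, k ≤ N →
    bSt p q (n + q^N * u) k = bSt p q n k + p^k * q^(N-k) * u := by
  intro k
  induction k with
  | zero => intro _; simp [bSt]
  | succ k ih =>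
      intro hk
      have hk' : k ≤ N := by omega
      have ihk := ih hk'
      show (p * bSt p q (n + q^N * u) k + p - 1) / q = _
      rw [ihk]
      have hsplit : p * (bSt p q n k + p ^ k * q ^ (N - k) * u) + p - 1
          = (p * bSt p q n k + p - 1) + (p^(k+1) * q^(N-(k+1)) * u) * q := by
        have h1 : q ^ (N - k) = q ^ (N - (k+1)) * q := by
          rw [← pow_succ]
          congr 1
          omega
        have key : p * (p ^ k * q ^ (N - k) * u) = p ^ (k + 1) * q ^ (N - (k + 1)) * u * q := by
          rw [h1]; ring
        rw [Nat.mul_add, key]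
        generalize p ^ (k + 1) * q ^ (N - (k + 1)) * u * q = T
        omega
      rw [hsplit, Nat.add_mul_div_right _ _ hq]
      show _ = (p * bSt p q n k + p - 1) / q + p ^ (k+1) * q ^ (N - (k+1)) * u
      ring_nf

/-- digits below level N are unchanged -/
lemma ddig_shift (hq : 0 < q) (hp : 0 < p) (n N u k : ℕ) (hk : k < N) :
    ddig p q (n + q^N * u) k = ddig p q n k := by
  have ha1 := a_shift (p := p) hq n N u k (by omega)
  have ha2 := a_shift (p := p) hq n N u (k+1) (by omega)
  have hb1 := b_shift hq hp n N u k (by omega)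
  have hb2 := b_shift hq hp n N u (k+1) (by omega)
  unfold ddig wdig xdig
  rw [ha1, ha2, hb1, hb2]
  push_cast
  ring

end Stmt2Aux

namespace Stmt2Aux
variable {p q : ℕ}

lemma emod_congr {Q : ℤ} (x y : ℤ) (h : Q ∣ x - y) : x % Q = y % Q := by
  obtain ⟨t, ht⟩ := h
  have hx : x = y + Q * t := by linarith
  rw [hx, Int.add_mul_emod_self_left]

lemma int_window_eq {Q x y : ℤ} (hx0 : 0 ≤ x) (hxq : x < Q) (hy0 : 0 ≤ y) (hyq : y < Q)
    (h : Q ∣ x - y) : x = y := by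
  have := Int.eq_zero_of_abs_lt_dvd h (by rw [abs_lt]; omega)
  omega

lemma wdig_eq_emod (hq : 0 < q) (n k : ℕ) :
    wdig p q n k = (-(p:ℤ) * aSt p q n k) % q := by
  have hb := wdig_bounds (p := p) hq n k
  have hq0 : (q:ℤ) ≠ 0 := by exact_mod_cast hq.ne'
  have h1 : (0:ℤ) ≤ (-(p:ℤ) * aSt p q n k) % q := Int.emod_nonneg _ hq0
  have h2 : (-(p:ℤ) * aSt p q n k) % q < q := Int.emod_lt_of_pos _ (by exact_mod_cast hq)
  refine int_window_eq hb.1 (by omega) h1 h2 ?_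
  have hd1 : (q:ℤ) ∣ wdig p q n k - (-(p:ℤ) * aSt p q n k) :=
    ⟨aSt p q n (k+1), by unfold wdig; ring⟩
  have hd2 : (q:ℤ) ∣ (-(p:ℤ) * aSt p q n k) - (-(p:ℤ) * aSt p q n k) % q := by
    exact ⟨(-(p:ℤ) * aSt p q n k) / q, by rw [Int.emod_def]; ring⟩
  have h3 := dvd_add hd1 hd2
  rwa [show wdig p q n k - -(p:ℤ) * (aSt p q n k) + ((-(p:ℤ) * aSt p q n k) - (-(p:ℤ) * aSt p q n k) % q)
      = wdig p q n k - (-(p:ℤ) * aSt p q n k) % q by ring] at h3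

lemma xdig_eq_emod (hq : 0 < q) (hp : 0 < p) (n k : ℕ) :
    xdig p q n k = (p:ℤ) - q + (-(p:ℤ) * ((bSt p q n k : ℤ) + 1)) % q := by
  have hb := xdig_bounds (p := p) hq hp n k
  have hq0 : (q:ℤ) ≠ 0 := by exact_mod_cast hq.ne'
  have h1 : (0:ℤ) ≤ (-(p:ℤ) * ((bSt p q n k : ℤ) + 1)) % q := Int.emod_nonneg _ hq0
  have h2 : (-(p:ℤ) * ((bSt p q n k : ℤ) + 1)) % q < q := Int.emod_lt_of_pos _ (by exact_mod_cast hq)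
  have key : xdig p q n k - ((p:ℤ) - q) = (-(p:ℤ) * ((bSt p q n k : ℤ) + 1)) % q := by
    refine int_window_eq (by omega) (by omega) h1 h2 ?_
    have hd1 : (q:ℤ) ∣ (xdig p q n k - ((p:ℤ) - q)) - (-(p:ℤ) * ((bSt p q n k : ℤ) + 1)) :=
      ⟨bSt p q n (k+1) + 1, by unfold xdig; ring⟩
    have hd2 : (q:ℤ) ∣ (-(p:ℤ) * ((bSt p q n k : ℤ) + 1)) - (-(p:ℤ) * ((bSt p q n k : ℤ) + 1)) % q := by
      exact ⟨(-(p:ℤ) * ((bSt p q n k : ℤ) + 1)) / q, by rw [Int.emod_def]; ring⟩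
    have h3 := dvd_add hd1 hd2
    rwa [show (xdig p q n k - ((p:ℤ) - q)) - (-(p:ℤ) * ((bSt p q n k : ℤ) + 1)) + ((-(p:ℤ) * ((bSt p q n k : ℤ) + 1)) - (-(p:ℤ) * ((bSt p q n k : ℤ) + 1)) % q)
        = (xdig p q n k - ((p:ℤ) - q)) - (-(p:ℤ) * ((bSt p q n k : ℤ) + 1)) % q by ring] at h3
  omega

/-- solving for a residue by shifting the start -/
lemma exists_shift_emod (hco : Nat.Coprime p q) (hq1 : 1 < q) (N : ℕ) (a r : ℤ)
    (hr0 : 0 ≤ r) (hrq : r < q) :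
    ∃ u : ℕ, (-(p:ℤ) * (a + (p:ℤ)^N * u)) % q = r := by
  haveI : NeZero q := ⟨by omega⟩
  have hu : IsUnit ((p : ZMod q)) := (ZMod.isUnit_iff_coprime p q).mpr hco
  have hu2 : IsUnit (-((p : ZMod q))^(N+1)) := (hu.pow _).neg
  obtain ⟨v, hv⟩ := hu2.exists_right_inv
  refine ⟨(v * ((r : ZMod q) + (p : ZMod q) * (a : ZMod q))).val, ?_⟩
  set u : ℕ := (v * ((r : ZMod q) + (p : ZMod q) * (a : ZMod q))).val with hu_def
  have hcastu : ((u : ℕ) : ZMod q) = v * ((r : ZMod q) + (p : ZMod q) * (a : ZMod q)) :=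
    ZMod.natCast_rightInverse _
  have hzero : (((-(p:ℤ) * (a + (p:ℤ)^N * u)) - r : ℤ) : ZMod q) = 0 := by
    push_cast
    rw [hcastu]
    have : -((p:ZMod q))^(N+1) * (v * ((r : ZMod q) + (p : ZMod q) * (a : ZMod q)))
        = (r : ZMod q) + (p : ZMod q) * (a : ZMod q) := by
      rw [← mul_assoc, hv, one_mul]
    have h2 : (p:ZMod q) * ((p:ZMod q))^N * (v * ((r : ZMod q) + (p : ZMod q) * (a : ZMod q)))
        = -((r : ZMod q) + (p : ZMod q) * (a : ZMod q)) := by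
      rw [← pow_succ']
      rw [← neg_neg (((p:ZMod q))^(N+1))]
      rw [neg_mul]
      rw [this]
    ring_nf
    ring_nf at h2
    linear_combination -h2
  have hdvd : (q:ℤ) ∣ (-(p:ℤ) * (a + (p:ℤ)^N * u)) - r :=
    (ZMod.intCast_zmod_eq_zero_iff_dvd _ q).mp hzero
  have := emod_congr (Q := (q:ℤ)) _ r hdvd
  rw [this, Int.emod_eq_of_lt hr0 hrq]

end Stmt2Aux

namespace Stmt2Aux
variable {p q : ℕ}

/-- digit at level N for shifted start, in residue form -/
lemma ddig_at (hq : 0 < q) (hp : 0 < p) (n N u : ℕ) :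
    ddig p q (n + q^N * u) N
      = (p:ℤ) - q + (-(p:ℤ) * (((bSt p q n N : ℤ) + (p:ℤ)^N * u) + 1)) % q
        - (-(p:ℤ) * ((aSt p q n N : ℤ) + (p:ℤ)^N * u)) % q := by
  have ha := a_shift (p := p) hq n N u N le_rfl
  have hb := b_shift hq hp n N u N le_rfl
  have ha' : ((aSt p q (n + q^N * u) N : ℕ) : ℤ) = (aSt p q n N : ℤ) + (p:ℤ)^N * u := by
    rw [ha]; push_cast [Nat.sub_self]; ring
  have hb' : ((bSt p q (n + q^N * u) N : ℕ) : ℤ) = (bSt p q n N : ℤ) + (p:ℤ)^N * u := by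
    rw [hb]; push_cast [Nat.sub_self]; ring
  unfold ddig
  rw [wdig_eq_emod hq, xdig_eq_emod hq hp, ha', hb']
  try ring

lemma exists_big (hco : Nat.Coprime p q) (hq1 : 1 < q) (hp : 0 < p) (n N : ℕ) :
    ∃ u : ℕ, (p:ℤ) - q ≤ ddig p q (n + q^N * u) N := by
  obtain ⟨u, hu⟩ := exists_shift_emod (p := p) hco hq1 N (aSt p q n N) 0 le_rfl (by exact_mod_cast (by omega : 0 < q))
  refine ⟨u, ?_⟩
  rw [ddig_at (by omega) hp, hu]
  have : (0:ℤ) ≤ (-(p:ℤ) * (((bSt p q n N : ℤ) + (p:ℤ)^N * u) + 1)) % q :=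
    Int.emod_nonneg _ (by exact_mod_cast (by omega : q ≠ 0))
  linarith

lemma exists_small (hco : Nat.Coprime p q) (hq1 : 1 < q) (hp : 0 < p) (n N : ℕ) :
    ∃ u : ℕ, ddig p q (n + q^N * u) N ≤ (p:ℤ) - q := by
  obtain ⟨u, hu⟩ := exists_shift_emod (p := p) hco hq1 N (aSt p q n N) ((q:ℤ) - 1) (by omega) (by omega)
  refine ⟨u, ?_⟩
  rw [ddig_at (by omega) hp, hu]
  have : (-(p:ℤ) * (((bSt p q n N : ℤ) + (p:ℤ)^N * u) + 1)) % q < q :=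
    Int.emod_lt_of_pos _ (by exact_mod_cast (by omega : 0 < q))
  linarith

lemma exists_pair (hco : Nat.Coprime p q) (hq1 : 1 < q) (hp : 0 < p) (n N : ℕ)
    (hnd : ¬ (q:ℤ) ∣ ((bSt p q n N : ℤ) - (aSt p q n N : ℤ) + 1)) :
    ∃ u1 u2 : ℕ, ddig p q (n + q^N * u1) N = ddig p q (n + q^N * u2) N + q := by
  have hq0 : (q:ℤ) ≠ 0 := by exact_mod_cast (by omega : q ≠ 0)
  have hqpos : (0:ℤ) < q := by exact_mod_cast (by omega : 0 < q)
  set c : ℤ := (bSt p q n N : ℤ) - (aSt p q n N : ℤ) with hc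
  set Z : ℤ := -(p:ℤ) * (c + 1) with hZ
  set δ : ℤ := Z % q with hδ
  have hδ0 : 0 ≤ δ := Int.emod_nonneg _ hq0
  have hδq : δ < q := Int.emod_lt_of_pos _ hqpos
  have hδne : δ ≠ 0 := by
    intro h0
    have hdq : (q:ℤ) ∣ Z := Int.dvd_of_emod_eq_zero h0
    have : (q:ℤ) ∣ (c+1) * p := by
      rw [hZ] at hdq
      rw [show (c+1) * (p:ℤ) = -(-(p:ℤ) * (c+1)) by ring]
      exact hdq.neg_right
    have hcop : IsCoprime ((q:ℤ)) ((p:ℤ)) := (Nat.isCoprime_iff_coprime.mpr hco).symm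
    exact hnd (hcop.dvd_of_dvd_mul_right this)
  -- u1 : B = 0
  obtain ⟨u1, hu1⟩ := exists_shift_emod (p := p) hco hq1 N (aSt p q n N) 0 le_rfl hqpos
  -- u2 : B = q - δ
  obtain ⟨u2, hu2⟩ := exists_shift_emod (p := p) hco hq1 N (aSt p q n N) ((q:ℤ) - δ) (by omega) (by omega)
  refine ⟨u1, u2, ?_⟩
  rw [ddig_at (by omega) hp, ddig_at (by omega) hp, hu1, hu2]
  set X1 : ℤ := -(p:ℤ) * ((aSt p q n N : ℤ) + (p:ℤ)^N * u1) with hX1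
  set X2 : ℤ := -(p:ℤ) * ((aSt p q n N : ℤ) + (p:ℤ)^N * u2) with hX2
  set Y1 : ℤ := -(p:ℤ) * (((bSt p q n N : ℤ) + (p:ℤ)^N * u1) + 1) with hY1
  set Y2 : ℤ := -(p:ℤ) * (((bSt p q n N : ℤ) + (p:ℤ)^N * u2) + 1) with hY2
  -- A1 = δ
  have hA1 : Y1 % q = δ := by
    refine int_window_eq (Int.emod_nonneg _ hq0) (Int.emod_lt_of_pos _ hqpos) hδ0 hδq ?_
    have e1 : Y1 % q - δ = X1 - (q:ℤ) * (Y1 / q) + (q:ℤ) * (Z / q) := by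
      rw [hδ, Int.emod_def, Int.emod_def, hY1, hX1, hZ, hc]; ring
    have hX1d : (q:ℤ) ∣ X1 := Int.dvd_of_emod_eq_zero hu1
    rw [e1]
    exact (hX1d.sub (dvd_mul_right _ _)).add (dvd_mul_right _ _)
  -- A2 = 0
  have hA2 : Y2 % q = 0 := by
    apply Int.emod_eq_zero_of_dvd
    have e2 : Y2 = (q:ℤ) * (1 + X2 / q + Z / q) := by
      have hX2e : X2 = (q:ℤ) - δ + q * (X2 / q) := by
        have h := Int.emod_def X2 q
        rw [hu2] at h
        linarith
      have hZe : Z = δ + q * (Z / q) := by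
        have h := Int.emod_def Z q
        rw [← hδ] at h
        linarith
      have hsum : Y2 = X2 + Z := by rw [hY2, hX2, hZ, hc]; ring
      linear_combination hsum + hX2e + hZe
    exact ⟨_, e2⟩
  rw [hA1, hA2]
  ring

/-- forced digit when c ≡ -1 mod q -/
lemma ddig_forced (hq : 0 < q) (hp : 0 < p) (n k : ℕ)
    (h : (q:ℤ) ∣ ((bSt p q n k : ℤ) - (aSt p q n k : ℤ) + 1)) :
    ddig p q n k = (p:ℤ) - q := by
  have hq0 : (q:ℤ) ≠ 0 := by exact_mod_cast hq.ne'
  have hqpos : (0:ℤ) < q := by exact_mod_cast hq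
  set W : ℤ := -(p:ℤ) * (aSt p q n k : ℤ) with hW
  set Y : ℤ := -(p:ℤ) * ((bSt p q n k : ℤ) + 1) with hY
  have hAB : Y % q = W % q := by
    apply emod_congr
    have e : Y - W = -(p:ℤ) * ((bSt p q n k : ℤ) - (aSt p q n k : ℤ) + 1) := by
      rw [hY, hW]; ring
    rw [e]
    exact Dvd.dvd.mul_left h _
  have : ddig p q n k = (p:ℤ) - q + Y % q - W % q := by
    unfold ddig
    rw [wdig_eq_emod hq, xdig_eq_emod hq hp, hY, hW]
    try ring
  rw [this, hAB]
  ring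

/-- the c-recursion when forced -/
lemma c_forced (hq : 0 < q) (hp : 0 < p) (n k : ℕ)
    (h : (q:ℤ) ∣ ((bSt p q n k : ℤ) - (aSt p q n k : ℤ) + 1)) :
    (q:ℤ) * ((bSt p q n (k+1) : ℤ) - (aSt p q n (k+1) : ℤ) + 1)
      = p * ((bSt p q n k : ℤ) - (aSt p q n k : ℤ) + 1) := by
  have hd := ddig_forced hq hp n k h
  have hrec : (q:ℤ) * ((bSt p q n (k+1) : ℤ) - (aSt p q n (k+1) : ℤ))
      = p * ((bSt p q n k : ℤ) - (aSt p q n k : ℤ)) + ddig p q n k := by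
    unfold ddig wdig xdig; ring
  rw [hd] at hrec
  linarith

/-- there is always a level ≥ N with a digit choice -/
lemma exists_choice_level (hco : Nat.Coprime p q) (hq1 : 1 < q) (hp : 0 < p) (hpq : q ≤ p)
    (n N : ℕ) :
    ∃ j : ℕ, ¬ (q:ℤ) ∣ ((bSt p q n (N+j) : ℤ) - (aSt p q n (N+j) : ℤ) + 1) := by
  by_contra hall
  push_neg at hall
  have key : ∀ j : ℕ, (q:ℤ)^j * ((bSt p q n (N+j) : ℤ) - (aSt p q n (N+j) : ℤ) + 1)
      = (p:ℤ)^j * ((bSt p q n N : ℤ) - (aSt p q n N : ℤ) + 1) := by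
    intro j
    induction j with
    | zero => simp
    | succ j ih =>
        have hstep := c_forced (by omega) hp n (N+j) (hall j)
        have : N + (j+1) = (N+j) + 1 := by omega
        rw [this]
        calc (q:ℤ)^(j+1) * ((bSt p q n ((N+j)+1) : ℤ) - (aSt p q n ((N+j)+1) : ℤ) + 1)
            = (q:ℤ)^j * ((q:ℤ) * ((bSt p q n ((N+j)+1) : ℤ) - (aSt p q n ((N+j)+1) : ℤ) + 1)) := by ring
          _ = (q:ℤ)^j * ((p:ℤ) * ((bSt p q n (N+j) : ℤ) - (aSt p q n (N+j) : ℤ) + 1)) := by rw [hstep]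
          _ = (p:ℤ) * ((q:ℤ)^j * ((bSt p q n (N+j) : ℤ) - (aSt p q n (N+j) : ℤ) + 1)) := by ring
          _ = (p:ℤ) * ((p:ℤ)^j * ((bSt p q n N : ℤ) - (aSt p q n N : ℤ) + 1)) := by rw [ih]
          _ = (p:ℤ)^(j+1) * ((bSt p q n N : ℤ) - (aSt p q n N : ℤ) + 1) := by ring
  set c0 : ℤ := (bSt p q n N : ℤ) - (aSt p q n N : ℤ) + 1 with hc0
  have hc0pos : 0 < c0 := by
    have := a_le_b (p := p) hpq n N
    have : (aSt p q n N : ℤ) ≤ (bSt p q n N : ℤ) := by exact_mod_cast this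
    omega
  have hdvd : ∀ j : ℕ, (q:ℤ)^j ∣ c0 := by
    intro j
    have hk := key j
    have h1 : (q:ℤ)^j ∣ (p:ℤ)^j * c0 := ⟨_, hk.symm⟩
    have hcop : IsCoprime ((q:ℤ)^j) ((p:ℤ)^j) :=
      ((Nat.isCoprime_iff_coprime.mpr hco).symm).pow
    exact hcop.dvd_of_dvd_mul_left h1
  have hle : ∀ j : ℕ, (q:ℤ)^j ≤ c0 := fun j => Int.le_of_dvd hc0pos (hdvd j)
  set t : ℕ := c0.toNat with ht
  have h2t : (t:ℤ) < (2:ℤ)^t := by exact_mod_cast Nat.lt_two_pow_self (n := t)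
  have hq2 : (2:ℤ)^t ≤ (q:ℤ)^t := by
    apply pow_le_pow_left₀ (by norm_num)
    exact_mod_cast hq1
  have hct : c0 = (t:ℤ) := by rw [ht]; omega
  have := hle t
  omega

/-- generic greedy extension -/
lemma extend (hq : 0 < q) (hp : 0 < p) (Good : ℤ → Prop)
    (hsel : ∀ n M : ℕ, ∃ u : ℕ, Good (ddig p q (n + q^M * u) M)) :
    ∀ (K n0 M0 : ℕ), ∃ w : ℕ, (∃ u, w = n0 + q^M0 * u) ∧
      ∀ t, t < K → Good (ddig p q w (M0 + t)) := by
  intro K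
  induction K with
  | zero => exact fun n0 M0 => ⟨n0, ⟨0, by simp⟩, fun t ht => absurd ht (by omega)⟩
  | succ K ih =>
      intro n0 M0
      obtain ⟨u, hu⟩ := hsel n0 M0
      obtain ⟨w, ⟨u1, hw⟩, hgood⟩ := ih (n0 + q^M0 * u) (M0+1)
      refine ⟨w, ⟨u + q * u1, by rw [hw]; ring⟩, ?_⟩
      intro t ht
      match t with
      | 0 =>
          rw [hw, show M0 + 0 = M0 by rfl]
          rw [ddig_shift hq hp _ _ _ _ (by omega)]
          exact hu
      | Nat.succ t =>
          have h := hgood t (by omega)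
          rw [show M0 + (t+1) = (M0+1) + t by omega]
          exact h

end Stmt2Aux

namespace Stmt2Aux
variable {p q : ℕ}

section Analytic
variable (hq1 : 1 < q) (hpq : q < p)

lemma hr0 (hq1 : 1 < q) (hpq : q < p) : 0 < (q:ℝ)/p := by
  apply div_pos <;> [exact_mod_cast (by omega : 0 < q); exact_mod_cast (by omega : 0 < p)]

lemma hr1 (hq1 : 1 < q) (hpq : q < p) : (q:ℝ)/p < 1 := by
  rw [div_lt_one (by exact_mod_cast (by omega : 0 < p))]
  exact_mod_cast hpq

lemma summable_geom_mul (hq1 : 1 < q) (hpq : q < p) (a : ℝ) :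
    Summable (fun k : ℕ => a * ((q:ℝ)/p)^k) :=
  (summable_geometric_of_lt_one (hr0 hq1 hpq).le (hr1 hq1 hpq)).mul_left a

lemma summable_of_bounded (hq1 : 1 < q) (hpq : q < p) (f : ℕ → ℝ) (C : ℝ)
    (hb : ∀ k, |f k| ≤ C * ((q:ℝ)/p)^(k+1)) : Summable f := by
  apply Summable.of_norm_bounded (g := fun k => (C * ((q:ℝ)/p)) * ((q:ℝ)/p)^k)
    (summable_geom_mul hq1 hpq _)
  intro k
  rw [Real.norm_eq_abs]
  calc |f k| ≤ C * ((q:ℝ)/p)^(k+1) := hb k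
    _ = (C * ((q:ℝ)/p)) * ((q:ℝ)/p)^k := by ring

lemma tail_abs_bound (hq1 : 1 < q) (hpq : q < p) (f : ℕ → ℝ) (C : ℝ) (N : ℕ)
    (hb : ∀ k, |f k| ≤ C * ((q:ℝ)/p)^(k+1)) :
    |∑' i : ℕ, f (i + N)| ≤ C * ((q:ℝ)/p)^(N+1) / (1 - (q:ℝ)/p) := by
  set r : ℝ := (q:ℝ)/p with hrdef
  have hr0' : 0 < r := hr0 hq1 hpq
  have hr1' : r < 1 := hr1 hq1 hpq
  have hgs : Summable (fun i : ℕ => (C * r^(N+1)) * r^i) := summable_geom_mul hq1 hpq _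
  have habs : ∀ i : ℕ, ‖f (i + N)‖ ≤ (C * r^(N+1)) * r^i := by
    intro i
    rw [Real.norm_eq_abs]
    calc |f (i+N)| ≤ C * r^((i+N)+1) := hb _
      _ = (C * r^(N+1)) * r^i := by ring
  have hsa : Summable (fun i : ℕ => ‖f (i + N)‖) :=
    Summable.of_nonneg_of_le (fun i => norm_nonneg _) habs hgs
  calc |∑' i : ℕ, f (i + N)| ≤ ∑' i : ℕ, ‖f (i + N)‖ := norm_tsum_le_tsum_norm hsa
    _ ≤ ∑' i : ℕ, (C * r^(N+1)) * r^i := Summable.tsum_le_tsum habs hsa hgs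
    _ = (C * r^(N+1)) * ∑' i : ℕ, r^i := tsum_mul_left
    _ = (C * r^(N+1)) * (1 - r)⁻¹ := by rw [tsum_geometric_of_lt_one hr0'.le hr1']
    _ = C * r^(N+1) / (1 - r) := by ring

/-- upper bound : all terms vanish below N -/
lemma tsum_abs_le (hq1 : 1 < q) (hpq : q < p) (f : ℕ → ℝ) (C : ℝ) (N : ℕ)
    (h0 : ∀ k, k < N → f k = 0)
    (hb : ∀ k, |f k| ≤ C * ((q:ℝ)/p)^(k+1)) :
    |∑' k, f k| ≤ C * ((q:ℝ)/p)^(N+1) / (1 - (q:ℝ)/p) := by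
  have hsum : Summable f := summable_of_bounded hq1 hpq f C hb
  have hsplit := Summable.sum_add_tsum_nat_add N hsum
  have hzero : ∑ i ∈ Finset.range N, f i = 0 :=
    Finset.sum_eq_zero (fun i hi => h0 i (Finset.mem_range.mp hi))
  have : ∑' k, f k = ∑' i : ℕ, f (i + N) := by rw [← hsplit, hzero, zero_add]
  rw [this]
  exact tail_abs_bound hq1 hpq f C N hb

/-- lower bound : zero below M, big at M, nonneg in the window, tail controlled -/
lemma tsum_lower (hq1 : 1 < q) (hpq : q < p) (f : ℕ → ℝ) (C : ℝ) (M K : ℕ)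
    (h0 : ∀ k, k < M → f k = 0)
    (hM : ((q:ℝ)/p)^(M+1) ≤ f M)
    (hpos : ∀ k, k < M+K+1 → 0 ≤ f k)
    (hb : ∀ k, |f k| ≤ C * ((q:ℝ)/p)^(k+1)) :
    ((q:ℝ)/p)^(M+1) - C * ((q:ℝ)/p)^(M+K+2) / (1 - (q:ℝ)/p) ≤ ∑' k, f k := by
  have hsum : Summable f := summable_of_bounded hq1 hpq f C hb
  have hsplit := Summable.sum_add_tsum_nat_add (M+K+1) hsum
  have h1 : ((q:ℝ)/p)^(M+1) ≤ ∑ i ∈ Finset.range (M+K+1), f i := by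
    calc ((q:ℝ)/p)^(M+1) ≤ f M := hM
      _ ≤ ∑ i ∈ Finset.range (M+K+1), f i :=
        Finset.single_le_sum (fun i hi => hpos i (Finset.mem_range.mp hi))
          (Finset.mem_range.mpr (by omega))
  have h2 : -(C * ((q:ℝ)/p)^(M+K+2) / (1 - (q:ℝ)/p)) ≤ ∑' i : ℕ, f (i + (M+K+1)) := by
    have := tail_abs_bound hq1 hpq f C (M+K+1) hb
    have h3 := neg_le_of_abs_le this
    calc -(C * ((q:ℝ)/p)^(M+K+2) / (1 - (q:ℝ)/p))
        = -(C * ((q:ℝ)/p)^((M+K+1)+1) / (1 - (q:ℝ)/p)) := by ring_nf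
      _ ≤ ∑' i : ℕ, f (i + (M+K+1)) := h3
  have h4 := add_le_add h1 h2
  rw [hsplit] at h4
  linarith

end Analytic
end Stmt2Aux

namespace Stmt2Aux
variable {p q : ℕ}

noncomputable def spanR (p q n : ℕ) : ℝ :=
  ∑' k : ℕ, ((ddig p q n k : ℝ)/q) * ((q:ℝ)/p)^(k+1)

lemma ddig_abs_le (hq : 0 < q) (hpq : q ≤ p) (n k : ℕ) : |(ddig p q n k : ℝ)| ≤ 2*(p:ℝ) := by
  have h := ddig_bounds (p := p) hq (by omega) n k
  have h2 : |ddig p q n k| ≤ 2*(p:ℤ) := by rw [abs_le]; omega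
  calc |(ddig p q n k : ℝ)| = ((|ddig p q n k| : ℤ) : ℝ) := by rw [Int.cast_abs]
    _ ≤ ((2*(p:ℤ) : ℤ) : ℝ) := by exact_mod_cast h2
    _ = 2*(p:ℝ) := by push_cast; ring

lemma summable_span (hq1 : 1 < q) (hpq : q < p) (n : ℕ) :
    Summable (fun k : ℕ => ((ddig p q n k : ℝ)/q) * ((q:ℝ)/p)^(k+1)) := by
  apply summable_of_bounded hq1 hpq _ (2*(p:ℝ)/q)
  intro k
  have h1 := ddig_abs_le (p := p) (by omega) (by omega : q ≤ p) n k
  have hq' : (0:ℝ) < q := by exact_mod_cast (by omega : 0 < q)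
  have hr : (0:ℝ) ≤ ((q:ℝ)/p)^(k+1) := by positivity
  rw [abs_mul, abs_div, abs_of_nonneg hr, abs_of_nonneg hq'.le]
  apply mul_le_mul_of_nonneg_right _ hr
  gcongr

lemma span_diff_eq (hq1 : 1 < q) (hpq : q < p) (m n : ℕ) :
    spanR p q m - spanR p q n
      = ∑' k : ℕ, (((ddig p q m k - ddig p q n k : ℤ) : ℝ)/q) * ((q:ℝ)/p)^(k+1) := by
  unfold spanR
  rw [← Summable.tsum_sub (summable_span hq1 hpq m) (summable_span hq1 hpq n)]
  congr 1
  funext k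
  push_cast
  ring

/-- difference of digits is at most 2q-2 -/
lemma ddig_diff_le (hq : 0 < q) (hp : 0 < p) (m n k : ℕ) :
    |((ddig p q m k - ddig p q n k : ℤ) : ℝ)| ≤ 2*(q:ℝ) - 2 := by
  have h1 := ddig_bounds (p := p) hq hp m k
  have h2 := ddig_bounds (p := p) hq hp n k
  have : |(ddig p q m k - ddig p q n k : ℤ)| ≤ 2*(q:ℤ) - 2 := by
    rw [abs_le]; omega
  calc |((ddig p q m k - ddig p q n k : ℤ) : ℝ)|
      = ((|ddig p q m k - ddig p q n k| : ℤ) : ℝ) := by rw [Int.cast_abs]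
    _ ≤ ((2*(q:ℤ) - 2 : ℤ) : ℝ) := by exact_mod_cast this
    _ = 2*(q:ℝ) - 2 := by push_cast; ring

/-- the key approximation lemma -/
lemma key_approx (hco : Nat.Coprime p q) (hq1 : 1 < q) (hpq : q < p)
    (n : ℕ) (ε : ℝ) (hε : 0 < ε) :
    ∃ m : ℕ, spanR p q m ≠ spanR p q n ∧ |spanR p q m - spanR p q n| < ε := by
  have hp : 0 < p := by omega
  have hq : 0 < q := by omega
  set r : ℝ := (q:ℝ)/p with hrdef
  have hr0' : 0 < r := hr0 hq1 hpq
  have hr1' : r < 1 := hr1 hq1 hpq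
  have hqR : (0:ℝ) < q := by exact_mod_cast hq
  set C : ℝ := (2*(q:ℝ) - 2)/q with hCdef
  have hC0 : 0 < C := by
    apply div_pos _ hqR
    have : (2:ℝ) ≤ q := by exact_mod_cast hq1
    linarith
  -- choose K
  obtain ⟨K, hK⟩ := exists_pow_lt_of_lt_one (x := (1-r)/C) (div_pos (by linarith) hC0) hr1'
  have hKgood : C * r^(K+1) / (1-r) < 1 := by
    rw [div_lt_one (by linarith)]
    have h1 : r^(K+1) ≤ r^K := by
      calc r^(K+1) = r^K * r := by ring
        _ ≤ r^K * 1 := by nlinarith [pow_pos hr0' K]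
        _ = r^K := by ring
    calc C * r^(K+1) ≤ C * r^K := by nlinarith
      _ < C * ((1-r)/C) := by nlinarith
      _ = 1 - r := by field_simp
  -- choose N
  set D : ℝ := C * r / (1-r) with hDdef
  have hD0 : 0 < D := div_pos (mul_pos hC0 hr0') (by linarith)
  obtain ⟨N, hN⟩ := exists_pow_lt_of_lt_one (x := ε/D) (div_pos hε hD0) hr1'
  have hNgood : C * r^(N+1) / (1-r) < ε := by
    have heq : C * r^(N+1)/(1-r) = D * r^N := by
      rw [hDdef]
      have h1r : (1:ℝ) - r ≠ 0 := by linarith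
      field_simp
      ring
    rw [heq]
    calc D * r^N < D * (ε/D) := by nlinarith [hD0, hN]
      _ = ε := by rw [mul_comm, div_mul_cancel₀ _ hD0.ne']
  -- choice level
  obtain ⟨j, hj⟩ := exists_choice_level (p := p) hco hq1 hp (by omega) n N
  set M : ℕ := N + j with hM
  -- the digit pair at level M
  obtain ⟨u1, u2, hpair⟩ := exists_pair (p := p) hco hq1 hp n M hj
  -- greedy extensions
  obtain ⟨w1, ⟨v1, hw1⟩, hg1⟩ := extend (p := p) hq hp (fun d => (p:ℤ) - q ≤ d)
    (fun n' M' => exists_big hco hq1 hp n' M') K (n + q^M * u1) (M+1)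
  obtain ⟨w2, ⟨v2, hw2⟩, hg2⟩ := extend (p := p) hq hp (fun d => d ≤ (p:ℤ) - q)
    (fun n' M' => exists_small hco hq1 hp n' M') K (n + q^M * u2) (M+1)
  -- digit facts
  have hw1low : ∀ k, k < M → ddig p q w1 k = ddig p q n k := by
    intro k hk
    rw [hw1, ddig_shift hq hp _ _ _ _ (by omega), ddig_shift hq hp _ _ _ _ hk]
  have hw2low : ∀ k, k < M → ddig p q w2 k = ddig p q n k := by
    intro k hk
    rw [hw2, ddig_shift hq hp _ _ _ _ (by omega), ddig_shift hq hp _ _ _ _ hk]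
  have hw1M : ddig p q w1 M = ddig p q (n + q^M * u1) M := by
    rw [hw1, ddig_shift hq hp _ _ _ _ (by omega)]
  have hw2M : ddig p q w2 M = ddig p q (n + q^M * u2) M := by
    rw [hw2, ddig_shift hq hp _ _ _ _ (by omega)]
  have hflip : ddig p q w1 M = ddig p q w2 M + q := by rw [hw1M, hw2M]; exact hpair
  -- separation of w1 and w2
  have hsep : spanR p q w1 - spanR p q w2 ≥ r^(M+1) - C * r^(M+K+2)/(1-r) := by
    rw [span_diff_eq hq1 hpq]
    apply tsum_lower hq1 hpq _ C M K
    · intro k hk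
      have he : ddig p q w1 k = ddig p q w2 k := by rw [hw1low k hk, hw2low k hk]
      rw [he]
      simp
    · have : ((ddig p q w1 M - ddig p q w2 M : ℤ) : ℝ) = (q:ℝ) := by
        rw [hflip]; push_cast; ring
      rw [this]
      rw [div_self (ne_of_gt hqR), one_mul]
    · intro k hk
      rcases lt_trichotomy k M with h | h | h
      · have he : ddig p q w1 k = ddig p q w2 k := by rw [hw1low k h, hw2low k h]
        rw [he]; simp
      · rw [h]
        have hx : ((ddig p q w1 M - ddig p q w2 M : ℤ) : ℝ) = (q:ℝ) := by
          rw [hflip]; push_cast; ring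
        rw [hx]
        positivity
      · -- M < k < M+K+1 : k = (M+1)+t with t < K
        have hk2 : ∃ t, t < K ∧ k = (M+1) + t := ⟨k - (M+1), by omega, by omega⟩
        obtain ⟨t, ht, rfl⟩ := hk2
        have h1 := hg1 t ht
        have h2 := hg2 t ht
        have : (0:ℤ) ≤ ddig p q w1 ((M+1)+t) - ddig p q w2 ((M+1)+t) := by omega
        have hc : (0:ℝ) ≤ ((ddig p q w1 ((M+1)+t) - ddig p q w2 ((M+1)+t) : ℤ) : ℝ) := by
          exact_mod_cast this
        positivity
    · intro k
      have h1 := ddig_diff_le (p := p) hq hp w1 w2 k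
      have hrp : (0:ℝ) ≤ r^(k+1) := by positivity
      rw [abs_mul, abs_div, abs_of_nonneg hrp, abs_of_nonneg hqR.le]
      apply mul_le_mul_of_nonneg_right _ hrp
      rw [hCdef]
      gcongr
  have hposfac : (0:ℝ) < r^(M+1) - C * r^(M+K+2)/(1-r) := by
    have hfac : r^(M+1) - C * r^(M+K+2)/(1-r) = r^(M+1) * (1 - C * r^(K+1)/(1-r)) := by
      have h1r : (1:ℝ) - r ≠ 0 := by linarith
      field_simp
      ring
    rw [hfac]
    apply mul_pos (pow_pos hr0' _)
    linarith
  have hne12 : spanR p q w1 ≠ spanR p q w2 := by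
    intro h
    rw [h] at hsep
    simp at hsep
    linarith
  -- closeness to n
  have hclose : ∀ w : ℕ, (∀ k, k < M → ddig p q w k = ddig p q n k) →
      |spanR p q w - spanR p q n| < ε := by
    intro w hlow
    rw [span_diff_eq hq1 hpq]
    have hbound := tsum_abs_le hq1 hpq
      (fun k => (((ddig p q w k - ddig p q n k : ℤ) : ℝ)/q) * r^(k+1)) C M
      (fun k hk => by
        show (((ddig p q w k - ddig p q n k : ℤ) : ℝ)/q) * r^(k+1) = 0
        rw [hlow k hk]; simp)
      (fun k => by
        have h1 := ddig_diff_le (p := p) hq hp w n k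
        have hrp : (0:ℝ) ≤ r^(k+1) := by positivity
        rw [abs_mul, abs_div, abs_of_nonneg hrp, abs_of_nonneg hqR.le]
        apply mul_le_mul_of_nonneg_right _ hrp
        rw [hCdef]
        gcongr)
    calc |∑' k : ℕ, (((ddig p q w k - ddig p q n k : ℤ) : ℝ)/q) * r^(k+1)|
        ≤ C * r^(M+1)/(1-r) := hbound
      _ ≤ C * r^(N+1)/(1-r) := by
          have hpow : r^(M+1) ≤ r^(N+1) := pow_le_pow_of_le_one hr0'.le hr1'.le (by omega)
          have h2 : C * r^(M+1) ≤ C * r^(N+1) := mul_le_mul_of_nonneg_left hpow hC0.le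
          have hinv : (0:ℝ) ≤ (1-r)⁻¹ := by
            have : (0:ℝ) < 1 - r := by linarith
            positivity
          rw [div_eq_mul_inv, div_eq_mul_inv]
          exact mul_le_mul_of_nonneg_right h2 hinv
      _ < ε := hNgood
  by_cases hcase : spanR p q w1 = spanR p q n
  · refine ⟨w2, ?_, hclose w2 hw2low⟩
    intro h
    exact hne12 (by rw [hcase, h])
  · exact ⟨w1, hcase, hclose w1 hw1low⟩

end Stmt2Aux

namespace Stmt2Aux
variable {p q : ℕ}

/-- uniqueness of the low branch -/
lemma low_branch_states (hq : 0 < q) {n : ℕ} {w : ℕ → ℤ}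
    (hw : IsBranch p q (LowAlph q) n w) : ∀ k, w k = wdig p q n k := by
  obtain ⟨s, hs0, hstep⟩ := hw
  have hq0 : (q:ℤ) ≠ 0 := by exact_mod_cast hq.ne'
  have hst : ∀ k, s k = aSt p q n k := by
    intro k
    induction k with
    | zero => exact hs0
    | succ k ih =>
        obtain ⟨heq, hmem⟩ := hstep k
        rw [ih] at heq
        have h2 := a_rec (p := p) (q := q) n k
        have hwb := wdig_bounds (p := p) hq n k
        rw [LowAlph, Set.mem_Icc] at hmem
        have hdvd : (q:ℤ) ∣ (w k - wdig p q n k) :=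
          ⟨(s (k+1) : ℤ) - aSt p q n (k+1), by linear_combination h2 - heq⟩
        have hz : w k - wdig p q n k = 0 := by
          apply Int.eq_zero_of_abs_lt_dvd hdvd
          rw [abs_lt]
          omega
        have hcast : ((s (k+1) : ℕ) : ℤ) = ((aSt p q n (k+1) : ℕ) : ℤ) := by
          apply mul_left_cancel₀ hq0
          rw [heq, h2]
          linarith [hz]
        exact_mod_cast hcast
  intro k
  obtain ⟨heq, _⟩ := hstep k
  rw [hst k, hst (k+1)] at heq
  have h2 := a_rec (p := p) (q := q) n k
  linarith [heq, h2]

/-- uniqueness of the high branch -/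
lemma up_branch_states (hq : 0 < q) {n : ℕ} {w : ℕ → ℤ}
    (hw : IsBranch p q (UpAlph p q) n w) : ∀ k, w k = xdig p q n k := by
  obtain ⟨s, hs0, hstep⟩ := hw
  have hq0 : (q:ℤ) ≠ 0 := by exact_mod_cast hq.ne'
  have hp : 0 < p := by
    by_contra hp0
    have hp0' : (p:ℤ) = 0 := by exact_mod_cast (by omega : p = 0)
    obtain ⟨heq0, hmem⟩ := hstep 0
    rw [UpAlph, Set.mem_Icc] at hmem
    have h1 : (0:ℤ) ≤ (q:ℤ) * ((s 1 : ℕ) : ℤ) := by positivity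
    rw [hp0'] at heq0 hmem
    have h2 : w 0 ≤ 0 - 1 := by simpa using hmem.2
    have h3 : (q:ℤ) * ((s 1 : ℕ) : ℤ) = w 0 := by simpa using heq0
    linarith
  have hst : ∀ k, s k = bSt p q n k := by
    intro k
    induction k with
    | zero => exact hs0
    | succ k ih =>
        obtain ⟨heq, hmem⟩ := hstep k
        rw [ih] at heq
        have h2 := b_rec (p := p) (q := q) n k
        have hwb := xdig_bounds (p := p) hq hp n k
        rw [UpAlph, Set.mem_Icc] at hmem
        have hdvd : (q:ℤ) ∣ (w k - xdig p q n k) :=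
          ⟨(s (k+1) : ℤ) - bSt p q n (k+1), by linear_combination h2 - heq⟩
        have hz : w k - xdig p q n k = 0 := by
          apply Int.eq_zero_of_abs_lt_dvd hdvd
          rw [abs_lt]
          omega
        have hcast : ((s (k+1) : ℕ) : ℤ) = ((bSt p q n (k+1) : ℕ) : ℤ) := by
          apply mul_left_cancel₀ hq0
          rw [heq, h2]
          linarith [hz]
        exact_mod_cast hcast
  intro k
  obtain ⟨heq, _⟩ := hstep k
  rw [hst k, hst (k+1)] at heq
  have h2 := b_rec (p := p) (q := q) n k
  linarith [heq, h2]

lemma summable_term (hq1 : 1 < q) (hpq : q < p) (d : ℕ → ℤ)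
    (hd : ∀ k, |(d k : ℝ)| ≤ 2*(p:ℝ)) :
    Summable (fun k : ℕ => ((d k : ℝ)/q) * ((q:ℝ)/p)^(k+1)) := by
  apply summable_of_bounded hq1 hpq _ (2*(p:ℝ)/q)
  intro k
  have hq' : (0:ℝ) < q := by exact_mod_cast (by omega : 0 < q)
  have hr : (0:ℝ) ≤ ((q:ℝ)/p)^(k+1) := by positivity
  rw [abs_mul, abs_div, abs_of_nonneg hr, abs_of_nonneg hq'.le]
  apply mul_le_mul_of_nonneg_right _ hr
  gcongr
  exact hd k

lemma rho_sub_eq_span (hq1 : 1 < q) (hpq : q < p) (n : ℕ) (dw dx : ℕ → ℤ)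
    (hw : ∀ k, dw k = wdig p q n k) (hx : ∀ k, dx k = xdig p q n k) :
    rho p q dx - rho p q dw = spanR p q n := by
  have hq : 0 < q := by omega
  have hp : 0 < p := by omega
  have hpR : (0:ℝ) < p := by exact_mod_cast hp
  have hbw : ∀ k, |(dw k : ℝ)| ≤ 2*(p:ℝ) := by
    intro k
    rw [hw k]
    have h := wdig_bounds (p := p) hq n k
    have h2 : |wdig p q n k| ≤ 2*(p:ℤ) := by rw [abs_le]; omega
    calc |((wdig p q n k : ℤ) : ℝ)| = ((|wdig p q n k| : ℤ) : ℝ) := by rw [Int.cast_abs]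
      _ ≤ ((2*(p:ℤ) : ℤ) : ℝ) := by exact_mod_cast h2
      _ = 2*(p:ℝ) := by push_cast; ring
  have hbx : ∀ k, |(dx k : ℝ)| ≤ 2*(p:ℝ) := by
    intro k
    rw [hx k]
    have h := xdig_bounds (p := p) hq hp n k
    have h2 : |xdig p q n k| ≤ 2*(p:ℤ) := by rw [abs_le]; omega
    calc |((xdig p q n k : ℤ) : ℝ)| = ((|xdig p q n k| : ℤ) : ℝ) := by rw [Int.cast_abs]
      _ ≤ ((2*(p:ℤ) : ℤ) : ℝ) := by exact_mod_cast h2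
      _ = 2*(p:ℝ) := by push_cast; ring
  unfold rho spanR
  rw [← Summable.tsum_sub (summable_term hq1 hpq dx hbx) (summable_term hq1 hpq dw hbw)]
  congr 1
  funext k
  rw [hw k, hx k]
  unfold ddig
  push_cast
  ring

end Stmt2Aux

theorem stmt2 (p q : ℕ) (hco : Nat.Coprime p q) (hq : 1 < q) (hpq : q < p)
    (hbig : 2 * q - 1 < p)
    (mw mx : ℕ → ℕ → ℤ)
    (hmw : ∀ n, IsBranch p q (LowAlph q) n (mw n))
    (hmx : ∀ n, IsBranch p q (UpAlph p q) n (mx n)) :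
    ∀ x ∈ closure {x : ℝ | ∃ n : ℕ, x = rho p q (mx n) - rho p q (mw n)},
      AccPt x (Filter.principal
        (closure {x : ℝ | ∃ n : ℕ, x = rho p q (mx n) - rho p q (mw n)})) := by
  classical
  set S : Set ℝ := {x : ℝ | ∃ n : ℕ, x = rho p q (mx n) - rho p q (mw n)} with hS
  have hq0 : 0 < q := by omega
  have hspan : ∀ n : ℕ, rho p q (mx n) - rho p q (mw n) = Stmt2Aux.spanR p q n := by
    intro n
    exact Stmt2Aux.rho_sub_eq_span hq hpq n (mw n) (mx n)
      (Stmt2Aux.low_branch_states hq0 (hmw n))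
      (Stmt2Aux.up_branch_states hq0 (hmx n))
  intro x hx
  rw [accPt_iff_nhds]
  intro U hU
  obtain ⟨ε, hε, hball⟩ := Metric.mem_nhds_iff.mp hU
  obtain ⟨y, hyS, hyd⟩ := Metric.mem_closure_iff.mp hx (ε/2) (by linarith)
  by_cases hxy : y = x
  · -- x itself is a span value; use the key approximation
    obtain ⟨n, hn⟩ := hyS
    have hxn : x = Stmt2Aux.spanR p q n := by rw [← hxy, hn, hspan n]
    obtain ⟨m, hne, hclose⟩ := Stmt2Aux.key_approx hco hq hpq n ε hε
    refine ⟨rho p q (mx m) - rho p q (mw m), ⟨hball ?_, subset_closure ⟨m, rfl⟩⟩, ?_⟩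
    · rw [Metric.mem_ball, hspan m, Real.dist_eq, hxn]
      exact hclose
    · rw [hspan m, hxn]
      exact hne
  · refine ⟨y, ⟨hball ?_, subset_closure hyS⟩, hxy⟩
    rw [Metric.mem_ball, Real.dist_eq]
    rw [Metric.mem_closure_iff] at hx
    rw [Real.dist_eq] at hyd
    rw [abs_sub_comm] at hyd
    linarith [abs_nonneg (y - x)]
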